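/- For |q|<1, |x|<1, the q-binomial theorem holds: (a x; q)_∞ / (x; q)_∞ = ∑_{n=0}^∞ ((a;q)_n / (q;q)_n) x^n. -/

import Mathlib

/-- The finite q-Pochhammer symbol `(a;q)_n = ∏_{j=0}^{n−1}(1 − a q^j)`. -/
def qPoch (a q : ℂ) (n : ℕ) : ℂ := ∏ j ∈ Finset.range n, (1 - a * q ^ j)

open Complex Filter Finset

namespace QBinAux

lemma qPoch_succ (a q : ℂ) (n : ℕ) :
    qPoch a q (n + 1) = qPoch a q n * (1 - a * q ^ n) := Finset.prod_range_succ _ _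

lemma one_sub_ne {c q : ℂ} (hc : ‖c‖ < 1) (hq : ‖q‖ < 1) (k : ℕ) : 1 - c * q ^ k ≠ 0 := by
  intro h
  have h1 : (1 : ℂ) = c * q ^ k := by linear_combination h
  have h2 : ‖c * q ^ k‖ < 1 := by
    rw [norm_mul, norm_pow]
    calc ‖c‖ * ‖q‖ ^ k ≤ ‖c‖ * 1 := by
          gcongr
          exact pow_le_one₀ (norm_nonneg q) hq.le
      _ < 1 := by simpa using hc
  rw [← h1] at h2
  simp at h2

lemma qPoch_q_ne_zero {q : ℂ} (hq : ‖q‖ < 1) (n : ℕ) : qPoch q q n ≠ 0 := by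
  rw [qPoch]
  exact Finset.prod_ne_zero_iff.mpr fun j _ => one_sub_ne hq hq j

/-- coefficients of the series -/
noncomputable def C (a q : ℂ) (n : ℕ) : ℂ := qPoch a q n / qPoch q q n

lemma C_rec (a : ℂ) {q : ℂ} (hq : ‖q‖ < 1) (n : ℕ) :
    C a q (n + 1) * (1 - q * q ^ n) = C a q n * (1 - a * q ^ n) := by
  have h1 := qPoch_q_ne_zero hq n
  have h2 : (1 : ℂ) - q * q ^ n ≠ 0 := one_sub_ne hq hq n
  unfold C
  rw [qPoch_succ, qPoch_succ]
  rw [div_mul_eq_mul_div, mul_div_mul_right _ _ h2]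
  ring

lemma exp_neg_le {s t : ℝ} (ht : 0 ≤ t) (hts : t ≤ s) (hs : s < 1) :
    Real.exp (-((1 - s)⁻¹ * t)) ≤ 1 - t := by
  have hs0 : 0 < 1 - s := by linarith
  have hinv : (1 - s) * (1 - s)⁻¹ = 1 := mul_inv_cancel₀ hs0.ne'
  have h1 : (1 - s)⁻¹ * t + 1 ≤ Real.exp ((1 - s)⁻¹ * t) := Real.add_one_le_exp _
  have hE : 0 < Real.exp ((1 - s)⁻¹ * t) := Real.exp_pos _
  rw [Real.exp_neg, inv_le_iff_one_le_mul₀' hE]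
  have hKinv : 0 < (1 - s)⁻¹ := inv_pos.mpr hs0
  nlinarith [mul_le_mul_of_nonneg_left hts hKinv.le]

lemma sum_pow_le {q : ℝ} (h0 : 0 ≤ q) (hq : q < 1) (n : ℕ) :
    ∑ j ∈ Finset.range n, q ^ j ≤ (1 - q)⁻¹ := by
  rw [← tsum_geometric_of_lt_one h0 hq]
  exact Summable.sum_le_tsum _ (fun i _ => pow_nonneg h0 i) (summable_geometric_of_lt_one h0 hq)

lemma norm_C_le (a : ℂ) {q : ℂ} (hq : ‖q‖ < 1) (n : ℕ) :
    ‖C a q n‖ ≤ Real.exp (‖a‖ * (1 - ‖q‖)⁻¹ + (1 - ‖q‖)⁻¹ * (1 - ‖q‖)⁻¹) := by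
  set K : ℝ := (1 - ‖q‖)⁻¹ with hK
  have hs0 : 0 < 1 - ‖q‖ := by linarith
  have hK0 : 0 < K := inv_pos.mpr hs0
  have hnum : ‖qPoch a q n‖ ≤ Real.exp (‖a‖ * K) := by
    rw [qPoch, norm_prod]
    calc ∏ j ∈ range n, ‖1 - a * q ^ j‖
        ≤ ∏ j ∈ range n, Real.exp (‖a‖ * ‖q‖ ^ j) := by
          apply Finset.prod_le_prod (fun _ _ => norm_nonneg _)
          intro j _
          calc ‖1 - a * q ^ j‖ ≤ ‖(1 : ℂ)‖ + ‖a * q ^ j‖ := norm_sub_le _ _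
            _ = ‖a‖ * ‖q‖ ^ j + 1 := by rw [norm_mul, norm_pow, norm_one]; ring
            _ ≤ Real.exp (‖a‖ * ‖q‖ ^ j) := Real.add_one_le_exp _
      _ = Real.exp (∑ j ∈ range n, ‖a‖ * ‖q‖ ^ j) := (Real.exp_sum _ _).symm
      _ ≤ Real.exp (‖a‖ * K) := by
          apply Real.exp_le_exp.mpr
          rw [← Finset.mul_sum]
          have := sum_pow_le (norm_nonneg q) hq n
          exact mul_le_mul_of_nonneg_left this (norm_nonneg a)
  have hden : Real.exp (-(K * K)) ≤ ‖qPoch q q n‖ := by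
    rw [qPoch, norm_prod]
    calc Real.exp (-(K * K))
        ≤ Real.exp (∑ j ∈ range n, -(K * ‖q‖ ^ (j + 1))) := by
          apply Real.exp_le_exp.mpr
          have hsum : ∑ j ∈ range n, -(K * ‖q‖ ^ (j + 1)) = -(K * ∑ j ∈ range n, ‖q‖ ^ (j + 1)) := by
            rw [Finset.mul_sum, ← Finset.sum_neg_distrib]
          rw [hsum, neg_le_neg_iff]
          apply mul_le_mul_of_nonneg_left _ hK0.le
          calc ∑ j ∈ range n, ‖q‖ ^ (j + 1) ≤ ∑ j ∈ range n, ‖q‖ ^ j := by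
                apply Finset.sum_le_sum
                intro j _
                exact pow_le_pow_of_le_one (norm_nonneg q) hq.le (Nat.le_succ j)
            _ ≤ K := sum_pow_le (norm_nonneg q) hq n
      _ = ∏ j ∈ range n, Real.exp (-(K * ‖q‖ ^ (j + 1))) := Real.exp_sum _ _
      _ ≤ ∏ j ∈ range n, ‖1 - q * q ^ j‖ := by
          apply Finset.prod_le_prod (fun _ _ => (Real.exp_pos _).le)
          intro j _
          have ht : (0 : ℝ) ≤ ‖q‖ ^ (j + 1) := pow_nonneg (norm_nonneg q) _
          have hts : ‖q‖ ^ (j + 1) ≤ ‖q‖ := by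
            simpa using pow_le_pow_of_le_one (norm_nonneg q) hq.le (Nat.one_le_iff_ne_zero.mpr (Nat.succ_ne_zero j))
          calc Real.exp (-(K * ‖q‖ ^ (j + 1))) ≤ 1 - ‖q‖ ^ (j + 1) := exp_neg_le ht hts hq
            _ = ‖(1 : ℂ)‖ - ‖q * q ^ j‖ := by
                rw [norm_mul, norm_pow, norm_one, pow_succ]; ring
            _ ≤ ‖1 - q * q ^ j‖ := norm_sub_norm_le _ _
  have hdpos : 0 < ‖qPoch q q n‖ := lt_of_lt_of_le (Real.exp_pos _) hden
  rw [C, norm_div]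
  calc ‖qPoch a q n‖ / ‖qPoch q q n‖ ≤ Real.exp (‖a‖ * K) / Real.exp (-(K * K)) := by
        apply div_le_div₀ (Real.exp_pos _).le hnum (Real.exp_pos _) hden
    _ = Real.exp (‖a‖ * K + K * K) := by
        rw [← Real.exp_sub]; ring_nf

noncomputable def M (a q : ℂ) : ℝ := Real.exp (‖a‖ * (1 - ‖q‖)⁻¹ + (1 - ‖q‖)⁻¹ * (1 - ‖q‖)⁻¹)

lemma M_pos (a q : ℂ) : 0 < M a q := Real.exp_pos _

lemma summable_C (a : ℂ) {q y : ℂ} (hq : ‖q‖ < 1) (hy : ‖y‖ < 1) :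
    Summable (fun n => C a q n * y ^ n) := by
  apply Summable.of_norm_bounded
    ((summable_geometric_of_lt_one (norm_nonneg y) hy).mul_left (M a q))
  intro n
  rw [norm_mul, norm_pow]
  exact mul_le_mul_of_nonneg_right (norm_C_le a hq n) (pow_nonneg (norm_nonneg y) n)

/-- the sum side -/
noncomputable def S (a q y : ℂ) : ℂ := ∑' n : ℕ, C a q n * y ^ n

lemma funEq (a : ℂ) {q y : ℂ} (hq : ‖q‖ < 1) (hy : ‖y‖ < 1) :
    (1 - y) * S a q y = (1 - a * y) * S a q (q * y) := by
  have hqy : ‖q * y‖ < 1 := by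
    rw [norm_mul]
    calc ‖q‖ * ‖y‖ ≤ 1 * ‖y‖ := mul_le_mul_of_nonneg_right hq.le (norm_nonneg y)
      _ < 1 := by simpa using hy
  have h1 : Summable (fun n => C a q n * y ^ n) := summable_C a hq hy
  have h2 : Summable (fun n => C a q n * (q * y) ^ n) := summable_C a hq hqy
  have hu : Summable (fun n => C a q n * y ^ n - C a q n * (q * y) ^ n) := h1.sub h2
  have hshift : ∀ n : ℕ,
      C a q (n + 1) * y ^ (n + 1) - C a q (n + 1) * (q * y) ^ (n + 1)
        = y * (C a q n * y ^ n) - (a * y) * (C a q n * (q * y) ^ n) := by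
    intro n
    have h := C_rec a hq n
    have e1 : (q * y) ^ (n + 1) = q * q ^ n * y ^ (n + 1) := by
      rw [mul_pow, pow_succ]; ring
    have e2 : (q * y) ^ n = q ^ n * y ^ n := mul_pow q y n
    rw [e1, e2]
    linear_combination y ^ (n + 1) * h
  have h0 : ∑' n : ℕ, (C a q n * y ^ n - C a q n * (q * y) ^ n)
      = ∑' n : ℕ, (y * (C a q n * y ^ n) - (a * y) * (C a q n * (q * y) ^ n)) := by
    rw [Summable.tsum_eq_zero_add hu]
    simp only [pow_zero, mul_one, sub_self, zero_add]
    exact tsum_congr hshift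
  have e1 : ∑' n : ℕ, (C a q n * y ^ n - C a q n * (q * y) ^ n)
      = (∑' n : ℕ, C a q n * y ^ n) - ∑' n : ℕ, C a q n * (q * y) ^ n := Summable.tsum_sub h1 h2
  have e2 : ∑' n : ℕ, (y * (C a q n * y ^ n) - (a * y) * (C a q n * (q * y) ^ n))
      = y * (∑' n : ℕ, C a q n * y ^ n) - (a * y) * ∑' n : ℕ, C a q n * (q * y) ^ n := by
    rw [Summable.tsum_sub (h1.mul_left y) (h2.mul_left (a * y)), tsum_mul_left, tsum_mul_left]
  rw [e1, e2] at h0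
  unfold S
  linear_combination h0

lemma iterEq (a : ℂ) {q x : ℂ} (hq : ‖q‖ < 1) (hx : ‖x‖ < 1) (N : ℕ) :
    (∏ k ∈ range N, (1 - x * q ^ k)) * S a q x
      = (∏ k ∈ range N, (1 - a * x * q ^ k)) * S a q (q ^ N * x) := by
  induction N with
  | zero => simp
  | succ N ih =>
    have hnorm : ‖q ^ N * x‖ < 1 := by
      rw [norm_mul, norm_pow]
      calc ‖q‖ ^ N * ‖x‖ ≤ 1 * ‖x‖ :=
            mul_le_mul_of_nonneg_right (pow_le_one₀ (norm_nonneg q) hq.le) (norm_nonneg x)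
        _ < 1 := by simpa using hx
    have h := funEq a hq hnorm
    have hq1 : q * (q ^ N * x) = q ^ (N + 1) * x := by ring
    rw [hq1] at h
    rw [prod_range_succ, prod_range_succ]
    calc (∏ k ∈ range N, (1 - x * q ^ k)) * (1 - x * q ^ N) * S a q x
        = (1 - x * q ^ N) * ((∏ k ∈ range N, (1 - x * q ^ k)) * S a q x) := by ring
      _ = (1 - x * q ^ N) * ((∏ k ∈ range N, (1 - a * x * q ^ k)) * S a q (q ^ N * x)) := by
          rw [ih]
      _ = (∏ k ∈ range N, (1 - a * x * q ^ k)) * ((1 - q ^ N * x) * S a q (q ^ N * x)) := by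
          ring
      _ = (∏ k ∈ range N, (1 - a * x * q ^ k)) * ((1 - a * (q ^ N * x)) * S a q (q ^ (N + 1) * x)) := by
          rw [h]
      _ = (∏ k ∈ range N, (1 - a * x * q ^ k)) * (1 - a * x * q ^ N) * S a q (q ^ (N + 1) * x) := by
          ring

lemma hasProd_aux {c q : ℂ} (hq : ‖q‖ < 1) (h : ∀ k : ℕ, 1 - c * q ^ k ≠ 0) :
    HasProd (fun k : ℕ => 1 - c * q ^ k)
      (Complex.exp (∑' k : ℕ, Complex.log (1 - c * q ^ k))) := by
  have hs : Summable (fun k : ℕ => Complex.log (1 - c * q ^ k)) := by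
    apply Summable.of_norm_bounded_eventually_nat
      ((summable_geometric_of_lt_one (norm_nonneg q) hq).mul_left (3 / 2 * ‖c‖))
    have htend : Tendsto (fun k : ℕ => ‖c‖ * ‖q‖ ^ k) atTop (nhds 0) := by
      simpa using (tendsto_pow_atTop_nhds_zero_of_norm_lt_one (by simpa using hq)).const_mul ‖c‖
    filter_upwards [htend.eventually_le_const (by norm_num : (0:ℝ) < 1/2)] with k hk
    have hck : ‖-(c * q ^ k)‖ ≤ 1 / 2 := by
      rw [norm_neg, norm_mul, norm_pow]; linarith
    calc ‖Complex.log (1 - c * q ^ k)‖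
        = ‖Complex.log (1 + -(c * q ^ k))‖ := by ring_nf
      _ ≤ 3 / 2 * ‖-(c * q ^ k)‖ := Complex.norm_log_one_add_half_le_self hck
      _ = 3 / 2 * ‖c‖ * ‖q‖ ^ k := by rw [norm_neg, norm_mul, norm_pow]; ring
  have h2 := hs.hasSum.cexp
  have h3 : (fun k : ℕ => 1 - c * q ^ k) = cexp ∘ fun k => Complex.log (1 - c * q ^ k) := by
    funext k
    simp [Function.comp, Complex.exp_log (h k)]
  rw [h3]
  exact h2

lemma tendsto_prod {c q : ℂ} (hq : ‖q‖ < 1) (h : ∀ k : ℕ, 1 - c * q ^ k ≠ 0) :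
    Tendsto (fun N => ∏ k ∈ range N, (1 - c * q ^ k)) atTop
        (nhds (∏' k : ℕ, (1 - c * q ^ k)))
      ∧ (∏' k : ℕ, (1 - c * q ^ k)) ≠ 0 := by
  have h1 := hasProd_aux hq h
  rw [h1.tprod_eq]
  exact ⟨h1.tendsto_prod_nat, Complex.exp_ne_zero _⟩

lemma tendsto_prod_zero {f : ℕ → ℂ} (K : ℕ) (hK : f K = 0) :
    Tendsto (fun N => ∏ k ∈ range N, f k) atTop (nhds (∏' k : ℕ, f k)) := by
  have hp : HasProd f 0 := by
    refine Tendsto.congr' ?_ tendsto_const_nhds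
    filter_upwards [eventually_ge_atTop ({K} : Finset ℕ)] with s hs
    exact (Finset.prod_eq_zero (hs (Finset.mem_singleton_self K)) hK).symm
  rw [hp.tprod_eq]
  refine Tendsto.congr' ?_ tendsto_const_nhds
  filter_upwards [eventually_ge_atTop (K + 1)] with N hN
  exact (Finset.prod_eq_zero (Finset.mem_range.mpr hN) hK).symm

lemma C_zero (a q : ℂ) : C a q 0 = 1 := by simp [C, qPoch]

lemma S_sub_one_bound (a : ℂ) {q y : ℂ} (hq : ‖q‖ < 1) (hy : ‖y‖ ≤ 1 / 2) :
    ‖S a q y - 1‖ ≤ 2 * M a q * ‖y‖ := by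
  have hy1 : ‖y‖ < 1 := lt_of_le_of_lt hy (by norm_num)
  have hsum := summable_C a hq hy1
  have hS : S a q y - 1 = ∑' n : ℕ, C a q (n + 1) * y ^ (n + 1) := by
    rw [S, Summable.tsum_eq_zero_add hsum, C_zero]
    simp
  rw [hS]
  have hgs : HasSum (fun n : ℕ => M a q * ‖y‖ * ‖y‖ ^ n) (M a q * ‖y‖ * (1 - ‖y‖)⁻¹) :=
    (hasSum_geometric_of_lt_one (norm_nonneg y) hy1).mul_left _
  have hb : ∀ n : ℕ, ‖C a q (n + 1) * y ^ (n + 1)‖ ≤ M a q * ‖y‖ * ‖y‖ ^ n := by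
    intro n
    rw [norm_mul, norm_pow]
    calc ‖C a q (n + 1)‖ * ‖y‖ ^ (n + 1) ≤ M a q * ‖y‖ ^ (n + 1) :=
          mul_le_mul_of_nonneg_right (norm_C_le a hq (n + 1)) (pow_nonneg (norm_nonneg y) _)
      _ = M a q * ‖y‖ * ‖y‖ ^ n := by rw [pow_succ]; ring
  calc ‖∑' n : ℕ, C a q (n + 1) * y ^ (n + 1)‖
      ≤ M a q * ‖y‖ * (1 - ‖y‖)⁻¹ := tsum_of_norm_bounded hgs hb
    _ ≤ 2 * M a q * ‖y‖ := by
        have hM := (M_pos a q).le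
        have hinv : (1 - ‖y‖)⁻¹ ≤ 2 := by
          rw [inv_le_comm₀ (by linarith) (by norm_num)]
          linarith
        have h0 : 0 ≤ M a q * ‖y‖ := mul_nonneg hM (norm_nonneg y)
        calc M a q * ‖y‖ * (1 - ‖y‖)⁻¹ ≤ M a q * ‖y‖ * 2 :=
              mul_le_mul_of_nonneg_left hinv h0
          _ = 2 * M a q * ‖y‖ := by ring

lemma tendsto_S (a : ℂ) {q x : ℂ} (hq : ‖q‖ < 1) (hx : ‖x‖ < 1) :
    Tendsto (fun N => S a q (q ^ N * x)) atTop (nhds 1) := by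
  have htend : Tendsto (fun N : ℕ => ‖x‖ * ‖q‖ ^ N) atTop (nhds 0) := by
    simpa using (tendsto_pow_atTop_nhds_zero_of_norm_lt_one (by simpa using hq)).const_mul ‖x‖
  have hsub : Tendsto (fun N => S a q (q ^ N * x) - 1) atTop (nhds 0) := by
    apply squeeze_zero_norm' (a := fun N => 2 * M a q * (‖x‖ * ‖q‖ ^ N))
    · filter_upwards [htend.eventually_le_const (by norm_num : (0:ℝ) < 1/2)] with N hN
      have hyn : ‖q ^ N * x‖ ≤ 1 / 2 := by
        rw [norm_mul, norm_pow]; rw [mul_comm]; exact hN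
      calc ‖S a q (q ^ N * x) - 1‖ ≤ 2 * M a q * ‖q ^ N * x‖ := S_sub_one_bound a hq hyn
        _ = 2 * M a q * (‖x‖ * ‖q‖ ^ N) := by rw [norm_mul, norm_pow]; ring
    · simpa using htend.const_mul (2 * M a q)
  have := hsub.add_const 1
  simpa using this

end QBinAux

/-- the q-binomial theorem: for `|q|<1`, `|x|<1`,
`(a x; q)_∞ / (x; q)_∞ = ∑_{n=0}^∞ ((a;q)_n / (q;q)_n) x^n`. -/
theorem q_binomial_theorem (a q x : ℂ) (hq : ‖q‖ < 1) (hx : ‖x‖ < 1) :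
    (∏' k : ℕ, (1 - a * x * q ^ k)) / (∏' k : ℕ, (1 - x * q ^ k)) =
      ∑' n : ℕ, (qPoch a q n / qPoch q q n) * x ^ n := by
  classical
  open QBinAux in
  have hBne : ∀ k : ℕ, (1 : ℂ) - x * q ^ k ≠ 0 := fun k => QBinAux.one_sub_ne hx hq k
  obtain ⟨hBt, hB0⟩ := QBinAux.tendsto_prod hq hBne
  have hAt : Tendsto (fun N => ∏ k ∈ Finset.range N, (1 - a * x * q ^ k)) atTop
      (nhds (∏' k : ℕ, (1 - a * x * q ^ k))) := by
    by_cases hA : ∀ k : ℕ, (1 : ℂ) - a * x * q ^ k ≠ 0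
    · exact (QBinAux.tendsto_prod hq hA).1
    · push_neg at hA
      obtain ⟨K, hK⟩ := hA
      exact QBinAux.tendsto_prod_zero K hK
  have hS := QBinAux.tendsto_S a hq hx
  have h1 : Tendsto (fun N => (∏ k ∈ Finset.range N, (1 - x * q ^ k)) * QBinAux.S a q x)
      atTop (nhds ((∏' k : ℕ, (1 - x * q ^ k)) * QBinAux.S a q x)) := hBt.mul_const _
  have h2 : Tendsto (fun N => (∏ k ∈ Finset.range N, (1 - a * x * q ^ k)) * QBinAux.S a q (q ^ N * x))
      atTop (nhds ((∏' k : ℕ, (1 - a * x * q ^ k)) * 1)) := hAt.mul hS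
  have h1' : Tendsto (fun N => (∏ k ∈ Finset.range N, (1 - x * q ^ k)) * QBinAux.S a q x)
      atTop (nhds ((∏' k : ℕ, (1 - a * x * q ^ k)) * 1)) := by
    refine Tendsto.congr ?_ h2
    intro N
    exact (QBinAux.iterEq a hq hx N).symm
  have hkey : (∏' k : ℕ, (1 - x * q ^ k)) * QBinAux.S a q x
      = (∏' k : ℕ, (1 - a * x * q ^ k)) * 1 := tendsto_nhds_unique h1 h1'
  have hSx : (∑' n : ℕ, (qPoch a q n / qPoch q q n) * x ^ n) = QBinAux.S a q x := rfl
  rw [hSx, div_eq_iff hB0]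
  linear_combination -hkey
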